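/- Let V be a finite-dimensional complex vector space, G a finite group acting linearly on V, and for v ∈ V let G_v be its stabilizer. Define rk v = (1/2)(dim V − dim V^{G_v}). If G preserves a non-degenerate alternating form on V, then rk v is a non-negative integer for every v ∈ V. -/

import Mathlib

open Module Matrix

private lemma even_finrank_of_alt_nondeg {W : Type*} [AddCommGroup W] [Module ℂ W]
    [FiniteDimensional ℂ W] (B : LinearMap.BilinForm ℂ W) (halt : B.IsAlt)
    (hnd : B.Nondegenerate) : Even (Module.finrank ℂ W) := by
  classical
  let b := Module.finBasis ℂ W
  set M := BilinForm.toMatrix b B with hM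
  have hdet : M.det ≠ 0 := (LinearMap.BilinForm.nondegenerate_iff_det_ne_zero b).mp hnd
  have hskew : M = -Mᵀ := by
    ext i j
    simp only [Matrix.neg_apply, Matrix.transpose_apply, hM,
      BilinForm.toMatrix_apply]
    exact (halt.neg_eq _ _).symm
  have key : M.det = (-1 : ℂ) ^ (Module.finrank ℂ W) * M.det := by
    conv_lhs => rw [hskew]
    rw [Matrix.det_neg, Matrix.det_transpose]
    simp
  have h1 : ((-1 : ℂ) ^ (Module.finrank ℂ W)) = 1 :=
    mul_right_cancel₀ hdet (by rw [one_mul, ← key])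
  exact (neg_one_pow_eq_one_iff_even (by norm_num : (-1 : ℂ) ≠ 1)).mp h1

/-- If a finite group `G ⊆ GL(V)` preserves a non-degenerate alternating form on a
finite-dimensional complex vector space `V`, then for every `v ∈ V` the rank
`rk v = (1/2)(dim V − dim V^{G_v})` is a non-negative integer: there is `m : ℕ` with
`dim V = dim V^{G_v} + 2m`, where `G_v` is the stabilizer of `v`. -/
theorem stmt_10 (V : Type*) [AddCommGroup V] [Module ℂ V] [FiniteDimensional ℂ V]
    (Ω : V →ₗ[ℂ] V →ₗ[ℂ] ℂ)
    (halt : ∀ v : V, Ω v v = 0)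
    (hnd : ∀ v : V, (∀ w : V, Ω v w = 0) → v = 0)
    (G : Subgroup (V ≃ₗ[ℂ] V)) (hGfin : Finite G)
    (hinv : ∀ g ∈ G, ∀ v w : V, Ω (g v) (g w) = Ω v w) :
    ∀ v : V, ∀ F : Submodule ℂ V,
      (∀ w : V, w ∈ F ↔ ∀ g ∈ G, g v = v → g w = w) →
      ∃ m : ℕ, Module.finrank ℂ V = Module.finrank ℂ F + 2 * m := by
  intro v F hF
  classical
  have hΩalt : Ω.IsAlt := halt
  have hrefl : Ω.IsRefl := hΩalt.isRefl
  have hΩnd : LinearMap.BilinForm.Nondegenerate Ω :=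
    hrefl.nondegenerate_iff_separatingLeft.mpr (fun x hx => hnd x hx)
  -- the stabilizer of v inside G, as a subgroup
  let H : Subgroup (V ≃ₗ[ℂ] V) :=
    { carrier := {g | g ∈ G ∧ g v = v}
      one_mem' := ⟨G.one_mem, rfl⟩
      mul_mem' := fun {a b} ha hb => ⟨G.mul_mem ha.1 hb.1, by
        show a (b v) = v
        rw [hb.2, ha.2]⟩
      inv_mem' := fun {a} ha => ⟨G.inv_mem ha.1, by
        show a⁻¹ v = v
        conv_lhs => rw [← ha.2]
        exact a.symm_apply_apply v⟩ }
  have hHfin : Finite H :=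
    Finite.of_injective (fun h : H => (⟨h.1, h.2.1⟩ : G))
      (fun a b hab => Subtype.ext (by simpa using congrArg Subtype.val hab))
  haveI := hHfin
  haveI : Fintype H := Fintype.ofFinite H
  haveI : Nonempty H := ⟨1⟩
  -- restriction of Ω to F is nondegenerate
  have hrest : (LinearMap.BilinForm.restrict Ω F).Nondegenerate := by
    refine (LinearMap.IsRefl.nondegenerate_iff_separatingLeft
      (LinearMap.IsAlt.isRefl (B := LinearMap.BilinForm.restrict Ω F) (fun x => halt x))).mpr ?_
    rintro ⟨x, hx⟩ h0
    have hxfix : ∀ h : H, (h : V ≃ₗ[ℂ] V) x = x := fun h =>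
      (hF x).mp hx h h.2.1 h.2.2
    have hx0 : ∀ w : V, Ω x w = 0 := by
      intro w
      have hsum_mem : (∑ h : H, (h : V ≃ₗ[ℂ] V) w) ∈ F := by
        rw [hF]
        intro g hg hgv
        have hgH : g ∈ H := ⟨hg, hgv⟩
        rw [map_sum]
        refine Fintype.sum_bijective (fun h : H => (⟨g, hgH⟩ : H) * h)
          ((Equiv.mulLeft (⟨g, hgH⟩ : H)).bijective) _ _ (fun h => ?_)
        rfl
      have h1 : Ω x (∑ h : H, (h : V ≃ₗ[ℂ] V) w) = 0 := h0 ⟨_, hsum_mem⟩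
      rw [map_sum] at h1
      have h2 : ∀ h : H, Ω x ((h : V ≃ₗ[ℂ] V) w) = Ω x w := by
        intro h
        conv_lhs => rw [← hxfix h]
        exact hinv h h.2.1 x w
      rw [Finset.sum_congr rfl (fun h _ => h2 h), Finset.sum_const] at h1
      simp only [Finset.card_univ, nsmul_eq_mul] at h1
      have hcard : (Fintype.card H : ℂ) ≠ 0 := by
        exact_mod_cast Fintype.card_ne_zero
      exact (mul_eq_zero.mp h1).resolve_left hcard
    exact Subtype.ext (hnd x hx0)
  have hcompl : IsCompl F (LinearMap.BilinForm.orthogonal Ω F) :=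
    LinearMap.BilinForm.isCompl_orthogonal_of_restrict_nondegenerate hrefl hrest
  have hoo : LinearMap.BilinForm.orthogonal Ω (LinearMap.BilinForm.orthogonal Ω F) = F :=
    LinearMap.BilinForm.orthogonal_orthogonal hΩnd hrefl F
  have hrest2 : (LinearMap.BilinForm.restrict Ω (LinearMap.BilinForm.orthogonal Ω F)).Nondegenerate := by
    rw [LinearMap.BilinForm.restrict_nondegenerate_iff_isCompl_orthogonal hrefl, hoo]
    exact hcompl.symm
  have haltr : (LinearMap.BilinForm.restrict Ω (LinearMap.BilinForm.orthogonal Ω F)).IsAlt := fun x => halt x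
  have heven : Even (finrank ℂ (LinearMap.BilinForm.orthogonal Ω F)) :=
    even_finrank_of_alt_nondeg _ haltr hrest2
  obtain ⟨m, hm⟩ := heven
  refine ⟨m, ?_⟩
  have hsum := Submodule.finrank_add_eq_of_isCompl hcompl
  omega
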